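/- Let $\Theta_i, \Theta_j, \Theta_k \in [0, \pi)$ and suppose a three-circle configuration exists: three circles $C_i, C_j, C_k$ in the Euclidean plane with radii $r_i, r_j, r_k$, pairwise intersecting with exterior angles $\Theta_i$ (between $C_j, C_k$), $\Theta_j$ (between $C_k, C_i$), $\Theta_k$ (between $C_i, C_j$), i.e., center distances given by the law-of-cosines formulas. If the three closed disks have a common point whose every neighborhood meets all three disk interiors appropriately (specifically $D_i \cap D_j \cap D_k \neq \emptyset$), then $\Theta_i + \Theta_j + \Theta_k \geq \pi$. Equivalently, if $\Theta_i + \Theta_j + \Theta_k < \pi$ then $D_i \cap D_j \cap D_k = \emptyset$. -/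

import Mathlib

open Real
open RealInnerProductSpace


private lemma arccos_antitone {x y : ℝ} (h : x ≤ y) : Real.arccos y ≤ Real.arccos x := by
  simp only [Real.arccos]
  have := Real.monotone_arcsin h
  linarith


private lemma sphere_lemma {E : Type*} [NormedAddCommGroup E] [InnerProductSpace ℝ E]
    (p q r : E) (hp : ‖p‖ = 1) (hq : ‖q‖ = 1) (hr : ‖r‖ = 1)
    (Θi Θj Θk : ℝ) (hΘi : Θi ∈ Set.Icc 0 π) (hΘj : Θj ∈ Set.Icc 0 π)
    (hΘk : Θk ∈ Set.Icc 0 π)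
    (hA : ⟪q, r⟫ ≤ -Real.cos Θi) (hB : ⟪r, p⟫ ≤ -Real.cos Θj)
    (hC : ⟪p, q⟫ ≤ -Real.cos Θk) : π ≤ Θi + Θj + Θk := by
  set A : ℝ := -⟪q, r⟫ with hAdef
  set B : ℝ := -⟪r, p⟫ with hBdef
  set C : ℝ := -⟪p, q⟫ with hCdef
  have hA1 : |(⟪q, r⟫)| ≤ 1 := by
    have := abs_real_inner_le_norm q r; rw [hq, hr] at this; linarith
  have hB1 : |(⟪r, p⟫)| ≤ 1 := by
    have := abs_real_inner_le_norm r p; rw [hr, hp] at this; linarith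
  have hC1 : |(⟪p, q⟫)| ≤ 1 := by
    have := abs_real_inner_le_norm p q; rw [hp, hq] at this; linarith
  rw [abs_le] at hA1 hB1 hC1
  have hAmem : -1 ≤ A ∧ A ≤ 1 := by constructor <;> simp [hAdef] <;> linarith [hA1.1, hA1.2]
  have hBmem : -1 ≤ B ∧ B ≤ 1 := by constructor <;> simp [hBdef] <;> linarith [hB1.1, hB1.2]
  have hCmem : -1 ≤ C ∧ C ≤ 1 := by constructor <;> simp [hCdef] <;> linarith [hC1.1, hC1.2]
  -- the three arccos angles
  set α := Real.arccos A with hα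
  set β := Real.arccos B with hβ
  set γ := Real.arccos C with hγ
  have hαΘ : α ≤ Θi := by
    have h1 : Real.cos Θi ≤ A := by simp [hAdef]; linarith
    have := arccos_antitone h1
    rwa [Real.arccos_cos hΘi.1 hΘi.2] at this
  have hβΘ : β ≤ Θj := by
    have h1 : Real.cos Θj ≤ B := by simp [hBdef]; linarith
    have := arccos_antitone h1
    rwa [Real.arccos_cos hΘj.1 hΘj.2] at this
  have hγΘ : γ ≤ Θk := by
    have h1 : Real.cos Θk ≤ C := by simp [hCdef]; linarith
    have := arccos_antitone h1
    rwa [Real.arccos_cos hΘk.1 hΘk.2] at this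
  suffices hgoal : π ≤ α + β + γ by linarith
  -- key inequality via Cauchy-Schwarz on the components orthogonal to p
  have key : A + B * C ≤ Real.sqrt (1 - B ^ 2) * Real.sqrt (1 - C ^ 2) := by
    set q' := q + C • p with hq'
    set r' := r + B • p with hr'
    have hpq : ⟪p, q⟫ = -C := by simp [hCdef]
    have hpr : ⟪r, p⟫ = -B := by simp [hBdef]
    have hqr : ⟪q, r⟫ = -A := by simp [hAdef]
    have hpp : ⟪p, p⟫ = 1 := by rw [real_inner_self_eq_norm_sq, hp]; norm_num
    have hinner : ⟪q', r'⟫ = -A - B * C := by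
      simp only [hq', hr', inner_add_left, inner_add_right, real_inner_smul_left,
        real_inner_smul_right]
      rw [hqr, hpp, real_inner_comm r p, hpr, real_inner_comm p q, hpq]
      ring
    have hq'n : ‖q'‖ ^ 2 = 1 - C ^ 2 := by
      rw [← real_inner_self_eq_norm_sq]
      simp only [hq', inner_add_left, inner_add_right, real_inner_smul_left,
        real_inner_smul_right]
      rw [real_inner_self_eq_norm_sq q, hq, hpp, real_inner_comm p q, hpq]
      ring
    have hr'n : ‖r'‖ ^ 2 = 1 - B ^ 2 := by
      rw [← real_inner_self_eq_norm_sq]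
      simp only [hr', inner_add_left, inner_add_right, real_inner_smul_left,
        real_inner_smul_right]
      rw [real_inner_self_eq_norm_sq r, hr, hpp, real_inner_comm r p, hpr]
      ring
    have hq's : ‖q'‖ = Real.sqrt (1 - C ^ 2) := by
      rw [← hq'n, Real.sqrt_sq (norm_nonneg _)]
    have hr's : ‖r'‖ = Real.sqrt (1 - B ^ 2) := by
      rw [← hr'n, Real.sqrt_sq (norm_nonneg _)]
    have habs := abs_real_inner_le_norm q' r'
    rw [abs_le] at habs
    have := habs.1
    rw [hinner, hq's, hr's] at this
    nlinarith [Real.sqrt_nonneg (1 - B ^ 2), Real.sqrt_nonneg (1 - C ^ 2), this]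
  by_cases hcase : π ≤ β + γ
  · have := Real.arccos_nonneg A
    linarith
  · push_neg at hcase
    have hβγ0 : 0 ≤ β + γ := by
      have := Real.arccos_nonneg B; have := Real.arccos_nonneg C; linarith
    have hcosadd : Real.cos (β + γ) ≤ -A := by
      rw [Real.cos_add, hβ, hγ, Real.cos_arccos hBmem.1 hBmem.2,
        Real.cos_arccos hCmem.1 hCmem.2, Real.sin_arccos, Real.sin_arccos]
      linarith
    by_contra hcon
    push_neg at hcon
    have hαpi := Real.arccos_le_pi A
    have hα0 := Real.arccos_nonneg A
    have hlt : β + γ < π - α := by linarith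
    have := Real.strictAntiOn_cos (Set.mem_Icc.mpr ⟨hβγ0, le_of_lt hcase⟩)
      (Set.mem_Icc.mpr ⟨by linarith, by linarith⟩) hlt
    rw [Real.cos_pi_sub, hα, Real.cos_arccos hAmem.1 hAmem.2] at this
    linarith

set_option maxHeartbeats 2000000 in
/-- Lemma 2.18: for a three-circle configuration, the three closed disks have a common
point only if `Θi + Θj + Θk ≥ π`; equivalently, if `Θi + Θj + Θk < π` then the triple
intersection is empty. -/
theorem stmt_16 (Θi Θj Θk ri rj rk : ℝ)
    (hΘi : Θi ∈ Set.Ico 0 π) (hΘj : Θj ∈ Set.Ico 0 π) (hΘk : Θk ∈ Set.Ico 0 π)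
    (hri : 0 < ri) (hrj : 0 < rj) (hrk : 0 < rk)
    (pi pj pk : EuclideanSpace ℝ (Fin 2))
    (hij : dist pi pj = Real.sqrt (ri ^ 2 + rj ^ 2 + 2 * ri * rj * Real.cos Θk))
    (hjk : dist pj pk = Real.sqrt (rj ^ 2 + rk ^ 2 + 2 * rj * rk * Real.cos Θi))
    (hki : dist pk pi = Real.sqrt (rk ^ 2 + ri ^ 2 + 2 * rk * ri * Real.cos Θj)) :
    ((Metric.closedBall pi ri ∩ Metric.closedBall pj rj ∩ Metric.closedBall pk rk).Nonempty →
        π ≤ Θi + Θj + Θk) ∧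
      (Θi + Θj + Θk < π →
        Metric.closedBall pi ri ∩ Metric.closedBall pj rj ∩ Metric.closedBall pk rk = ∅) := by
  
  have main : (Metric.closedBall pi ri ∩ Metric.closedBall pj rj ∩
      Metric.closedBall pk rk).Nonempty → π ≤ Θi + Θj + Θk := by
    rintro ⟨x, ⟨hxi, hxj⟩, hxk⟩
    rw [Metric.mem_closedBall] at hxi hxj hxk
    set u : EuclideanSpace ℝ (Fin 2) := pi - x with hu
    set v : EuclideanSpace ℝ (Fin 2) := pj - x with hv
    set w : EuclideanSpace ℝ (Fin 2) := pk - x with hw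
    have hun : ‖u‖ ≤ ri := by rw [hu, ← dist_eq_norm, dist_comm]; exact hxi
    have hvn : ‖v‖ ≤ rj := by rw [hv, ← dist_eq_norm, dist_comm]; exact hxj
    have hwn : ‖w‖ ≤ rk := by rw [hw, ← dist_eq_norm, dist_comm]; exact hxk
    -- squared distances of the centers
    have hLij : ‖u - v‖ ^ 2 = ri ^ 2 + rj ^ 2 + 2 * ri * rj * Real.cos Θk := by
      have : u - v = pi - pj := by rw [hu, hv]; abel
      rw [this, ← dist_eq_norm, hij, Real.sq_sqrt (by nlinarith [sq_nonneg (ri - rj), mul_nonneg (mul_pos hri hrj).le (by linarith [Real.neg_one_le_cos Θk] : (0:ℝ) ≤ 1 + Real.cos Θk)])]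
    have hLjk : ‖v - w‖ ^ 2 = rj ^ 2 + rk ^ 2 + 2 * rj * rk * Real.cos Θi := by
      have : v - w = pj - pk := by rw [hv, hw]; abel
      rw [this, ← dist_eq_norm, hjk, Real.sq_sqrt (by nlinarith [sq_nonneg (rj - rk), mul_nonneg (mul_pos hrj hrk).le (by linarith [Real.neg_one_le_cos Θi] : (0:ℝ) ≤ 1 + Real.cos Θi)])]
    have hLki : ‖w - u‖ ^ 2 = rk ^ 2 + ri ^ 2 + 2 * rk * ri * Real.cos Θj := by
      have : w - u = pk - pi := by rw [hw, hu]; abel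
      rw [this, ← dist_eq_norm, hki, Real.sq_sqrt (by nlinarith [sq_nonneg (rk - ri), mul_nonneg (mul_pos hrk hri).le (by linarith [Real.neg_one_le_cos Θj] : (0:ℝ) ≤ 1 + Real.cos Θj)])]
    -- inner products
    have hiuv : ⟪u, v⟫ = (‖u‖ ^ 2 + ‖v‖ ^ 2 - (ri ^ 2 + rj ^ 2 + 2 * ri * rj * Real.cos Θk)) / 2 := by
      have := norm_sub_sq_real u v; rw [hLij] at this; linarith
    have hivw : ⟪v, w⟫ = (‖v‖ ^ 2 + ‖w‖ ^ 2 - (rj ^ 2 + rk ^ 2 + 2 * rj * rk * Real.cos Θi)) / 2 := by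
      have := norm_sub_sq_real v w; rw [hLjk] at this; linarith
    have hiwu : ⟪w, u⟫ = (‖w‖ ^ 2 + ‖u‖ ^ 2 - (rk ^ 2 + ri ^ 2 + 2 * rk * ri * Real.cos Θj)) / 2 := by
      have := norm_sub_sq_real w u; rw [hLki] at this; linarith
    -- lift to unit vectors on the sphere in ℝ³
    set su : ℝ := Real.sqrt (ri ^ 2 - ‖u‖ ^ 2) with hsu
    set sv : ℝ := Real.sqrt (rj ^ 2 - ‖v‖ ^ 2) with hsv
    set sw : ℝ := Real.sqrt (rk ^ 2 - ‖w‖ ^ 2) with hsw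
    have hsu2 : su ^ 2 = ri ^ 2 - ‖u‖ ^ 2 := Real.sq_sqrt (by nlinarith [mul_nonneg (sub_nonneg.mpr hun) (add_nonneg hri.le (norm_nonneg u))])
    have hsv2 : sv ^ 2 = rj ^ 2 - ‖v‖ ^ 2 := Real.sq_sqrt (by nlinarith [mul_nonneg (sub_nonneg.mpr hvn) (add_nonneg hrj.le (norm_nonneg v))])
    have hsw2 : sw ^ 2 = rk ^ 2 - ‖w‖ ^ 2 := Real.sq_sqrt (by nlinarith [mul_nonneg (sub_nonneg.mpr hwn) (add_nonneg hrk.le (norm_nonneg w))])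
    set P : EuclideanSpace ℝ (Fin 3) :=
      (WithLp.equiv 2 (Fin 3 → ℝ)).symm ![u 0 / ri, u 1 / ri, su / ri] with hP
    set Q : EuclideanSpace ℝ (Fin 3) :=
      (WithLp.equiv 2 (Fin 3 → ℝ)).symm ![v 0 / rj, v 1 / rj, sv / rj] with hQ
    set R : EuclideanSpace ℝ (Fin 3) :=
      (WithLp.equiv 2 (Fin 3 → ℝ)).symm ![w 0 / rk, w 1 / rk, sw / rk] with hR
    have hu2 : ‖u‖ ^ 2 = u 0 ^ 2 + u 1 ^ 2 := by
      rw [← real_inner_self_eq_norm_sq, PiLp.inner_apply, Fin.sum_univ_two]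
      simp [RCLike.inner_apply]
    have hv2 : ‖v‖ ^ 2 = v 0 ^ 2 + v 1 ^ 2 := by
      rw [← real_inner_self_eq_norm_sq, PiLp.inner_apply, Fin.sum_univ_two]
      simp [RCLike.inner_apply]
    have hw2 : ‖w‖ ^ 2 = w 0 ^ 2 + w 1 ^ 2 := by
      rw [← real_inner_self_eq_norm_sq, PiLp.inner_apply, Fin.sum_univ_two]
      simp [RCLike.inner_apply]
    have huv2 : ⟪u, v⟫ = u 0 * v 0 + u 1 * v 1 := by
      rw [PiLp.inner_apply, Fin.sum_univ_two]; simp [RCLike.inner_apply]; ring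
    have hvw2 : ⟪v, w⟫ = v 0 * w 0 + v 1 * w 1 := by
      rw [PiLp.inner_apply, Fin.sum_univ_two]; simp [RCLike.inner_apply]; ring
    have hwu2 : ⟪w, u⟫ = w 0 * u 0 + w 1 * u 1 := by
      rw [PiLp.inner_apply, Fin.sum_univ_two]; simp [RCLike.inner_apply]; ring
    have hPn : ‖P‖ = 1 := by
      have h2 : ‖P‖ ^ 2 = 1 := by
        rw [← real_inner_self_eq_norm_sq, hP, PiLp.inner_apply, Fin.sum_univ_three]
        simp only [WithLp.equiv_symm_apply, PiLp.toLp_apply, WithLp.ofLp_toLp, Matrix.cons_val_zero, Matrix.cons_val_one,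
          Matrix.head_cons, Matrix.cons_val_two, Matrix.tail_cons, RCLike.inner_apply,
          conj_trivial]
        field_simp
        linarith [hsu2, hu2]
      rw [← Real.sqrt_sq (norm_nonneg P), h2, Real.sqrt_one]
    have hQn : ‖Q‖ = 1 := by
      have h2 : ‖Q‖ ^ 2 = 1 := by
        rw [← real_inner_self_eq_norm_sq, hQ, PiLp.inner_apply, Fin.sum_univ_three]
        simp only [WithLp.equiv_symm_apply, PiLp.toLp_apply, WithLp.ofLp_toLp, Matrix.cons_val_zero, Matrix.cons_val_one,
          Matrix.head_cons, Matrix.cons_val_two, Matrix.tail_cons, RCLike.inner_apply,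
          conj_trivial]
        field_simp
        linarith [hsv2, hv2]
      rw [← Real.sqrt_sq (norm_nonneg Q), h2, Real.sqrt_one]
    have hRn : ‖R‖ = 1 := by
      have h2 : ‖R‖ ^ 2 = 1 := by
        rw [← real_inner_self_eq_norm_sq, hR, PiLp.inner_apply, Fin.sum_univ_three]
        simp only [WithLp.equiv_symm_apply, PiLp.toLp_apply, WithLp.ofLp_toLp, Matrix.cons_val_zero, Matrix.cons_val_one,
          Matrix.head_cons, Matrix.cons_val_two, Matrix.tail_cons, RCLike.inner_apply,
          conj_trivial]
        field_simp
        linarith [hsw2, hw2]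
      rw [← Real.sqrt_sq (norm_nonneg R), h2, Real.sqrt_one]
    -- inner product bounds
    have hsunn : 0 ≤ su := Real.sqrt_nonneg _
    have hsvnn : 0 ≤ sv := Real.sqrt_nonneg _
    have hswnn : 0 ≤ sw := Real.sqrt_nonneg _
    have hPQ : ⟪P, Q⟫ ≤ -Real.cos Θk := by
      have hiPQ : ⟪P, Q⟫ = (⟪u, v⟫ + su * sv) / (ri * rj) := by
        rw [hP, hQ, PiLp.inner_apply, Fin.sum_univ_three]
        simp only [WithLp.equiv_symm_apply, PiLp.toLp_apply, WithLp.ofLp_toLp, Matrix.cons_val_zero, Matrix.cons_val_one,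
          Matrix.head_cons, Matrix.cons_val_two, Matrix.tail_cons, RCLike.inner_apply,
          conj_trivial]
        rw [huv2]; field_simp; try ring
      rw [hiPQ, div_le_iff₀ (by positivity)]
      have hgm : su * sv ≤ ((ri ^ 2 - ‖u‖ ^ 2) + (rj ^ 2 - ‖v‖ ^ 2)) / 2 := by
        linarith [sq_nonneg (su - sv), hsu2, hsv2]
      rw [hiuv]; linarith [hgm]
    have hQR : ⟪Q, R⟫ ≤ -Real.cos Θi := by
      have hiQR : ⟪Q, R⟫ = (⟪v, w⟫ + sv * sw) / (rj * rk) := by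
        rw [hQ, hR, PiLp.inner_apply, Fin.sum_univ_three]
        simp only [WithLp.equiv_symm_apply, PiLp.toLp_apply, WithLp.ofLp_toLp, Matrix.cons_val_zero, Matrix.cons_val_one,
          Matrix.head_cons, Matrix.cons_val_two, Matrix.tail_cons, RCLike.inner_apply,
          conj_trivial]
        rw [hvw2]; field_simp; try ring
      rw [hiQR, div_le_iff₀ (by positivity)]
      have hgm : sv * sw ≤ ((rj ^ 2 - ‖v‖ ^ 2) + (rk ^ 2 - ‖w‖ ^ 2)) / 2 := by
        linarith [sq_nonneg (sv - sw), hsv2, hsw2]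
      rw [hivw]; linarith [hgm]
    have hRP : ⟪R, P⟫ ≤ -Real.cos Θj := by
      have hiRP : ⟪R, P⟫ = (⟪w, u⟫ + sw * su) / (rk * ri) := by
        rw [hR, hP, PiLp.inner_apply, Fin.sum_univ_three]
        simp only [WithLp.equiv_symm_apply, PiLp.toLp_apply, WithLp.ofLp_toLp, Matrix.cons_val_zero, Matrix.cons_val_one,
          Matrix.head_cons, Matrix.cons_val_two, Matrix.tail_cons, RCLike.inner_apply,
          conj_trivial]
        rw [hwu2]; field_simp; try ring
      rw [hiRP, div_le_iff₀ (by positivity)]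
      have hgm : sw * su ≤ ((rk ^ 2 - ‖w‖ ^ 2) + (ri ^ 2 - ‖u‖ ^ 2)) / 2 := by
        linarith [sq_nonneg (sw - su), hsw2, hsu2]
      rw [hiwu]; linarith [hgm]
    exact sphere_lemma P Q R hPn hQn hRn Θi Θj Θk ⟨hΘi.1, hΘi.2.le⟩ ⟨hΘj.1, hΘj.2.le⟩
      ⟨hΘk.1, hΘk.2.le⟩ hQR hRP hPQ
  refine ⟨main, fun hlt => ?_⟩
  by_contra hne
  exact absurd (main (Set.nonempty_iff_ne_empty.mpr hne)) (by linarith)
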